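/- Let π : E → B be a Hurewicz fibration between connected, locally path connected, semi-locally simply connected spaces with the homotopy type of a CW-complex, and let P_E : E' → E and P_B : B' → B be the universal covering projections. Then there exists a Hurewicz fibration π' : E' → B' such that P_B ∘ π' = π ∘ P_E. -/

import Mathlib

open Topology Metric unitInterval Set

universe u v w

/-- A continuous map is a *Hurewicz fibration* if it has the homotopy lifting property
with respect to all topological spaces. -/
def IsHurewiczFibration {E : Type u} {B : Type v} [TopologicalSpace E] [TopologicalSpace B]
    (π : E → B) : Prop :=
  Continuous π ∧
    ∀ (X : Type w) [TopologicalSpace X] (H : C(X × I, B)) (h₀ : C(X, E)),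
      (∀ x : X, π (h₀ x) = H (x, 0)) →
        ∃ H' : C(X × I, E), (∀ x : X, H' (x, 0) = h₀ x) ∧ ∀ z : X × I, π (H' z) = H z

/-- A (classical, Hatcher-style) CW-structure on a topological space `X`:
cells in each dimension with characteristic maps from closed Euclidean disks,
satisfying the usual axioms (open cells partition `X`, characteristic maps are
embeddings on open disks, boundaries attach to finitely many lower-dimensional cells,
and `X` carries the weak topology). -/
structure CWStructure (X : Type u) [TopologicalSpace X] : Type (u + 1) where
  /-- index types of the `n`-cells -/
  cell : ℕ → Type u
  /-- characteristic maps defined on the closed unit disk of `ℝⁿ` -/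
  map : ∀ n, cell n → EuclideanSpace ℝ (Fin n) → X
  continuousOn : ∀ n (i : cell n), ContinuousOn (map n i) (closedBall 0 1)
  isEmbedding_restrict : ∀ n (i : cell n),
    IsEmbedding ((ball (0 : EuclideanSpace ℝ (Fin n)) 1).restrict (map n i))
  pairwiseDisjoint : ∀ (c c' : Σ n, cell n), c ≠ c' →
    Disjoint (map c.1 c.2 '' ball 0 1) (map c'.1 c'.2 '' ball 0 1)
  iUnion_cells : (⋃ (n : ℕ) (i : cell n), map n i '' ball 0 1) = univ
  boundary_subset : ∀ n (i : cell n),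
    map n i '' sphere 0 1 ⊆ ⋃ (m : ℕ) (_ : m < n) (j : cell m), map m j '' ball 0 1
  closure_finite : ∀ n (i : cell n), ∃ S : Finset (Σ m, cell m),
    map n i '' sphere 0 1 ⊆ ⋃ c ∈ S, map c.1 c.2 '' ball 0 1
  weak_topology : ∀ A : Set X,
    IsClosed A ↔ ∀ n (i : cell n), IsClosed (map n i ⁻¹' A ∩ closedBall 0 1)
  t2 : T2Space X

namespace CWStructure

variable {X : Type u} [TopologicalSpace X]

/-- The `n`-skeleton of a CW-structure: the union of all cells of dimension `≤ n`. -/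
def skeleton (S : CWStructure X) (n : ℕ) : Set X :=
  ⋃ (m : ℕ) (_ : m ≤ n) (i : S.cell m), S.map m i '' closedBall 0 1

/-- The CW-structure `S` has dimension at most `d`. -/
def DimLE (S : CWStructure X) (d : ℕ) : Prop := ∀ n, d < n → IsEmpty (S.cell n)

end CWStructure

/-- `X` has the homotopy type of a CW-complex. -/
def HasCWHomotopyType (X : Type u) [TopologicalSpace X] : Prop :=
  ∃ (C : Type u) (_ : TopologicalSpace C),
    Nonempty (CWStructure C) ∧ Nonempty (ContinuousMap.HomotopyEquiv X C)

/-- `X` has the homotopy type of a finite-dimensional CW-complex. -/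
def HasFinDimCWHomotopyType (X : Type u) [TopologicalSpace X] : Prop :=
  ∃ (C : Type u) (_ : TopologicalSpace C) (S : CWStructure C) (d : ℕ),
    S.DimLE d ∧ Nonempty (ContinuousMap.HomotopyEquiv X C)

/-- Lebesgue covering dimension at most `n`: every open cover admits an open refinement
in which every point lies in at most `n + 1` members. -/
def CovDimLE (X : Type u) [TopologicalSpace X] (n : ℕ) : Prop :=
  ∀ 𝒰 : Set (Set X), (∀ U ∈ 𝒰, IsOpen U) → ⋃₀ 𝒰 = univ →
    ∃ 𝒱 : Set (Set X), (∀ V ∈ 𝒱, IsOpen V) ∧ ⋃₀ 𝒱 = univ ∧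
      (∀ V ∈ 𝒱, ∃ U ∈ 𝒰, V ⊆ U) ∧
      ∀ x : X, {V | V ∈ 𝒱 ∧ x ∈ V}.Finite ∧ {V | V ∈ 𝒱 ∧ x ∈ V}.ncard ≤ n + 1

/-- `X` has finite Lebesgue covering dimension. -/
def FiniteCovDim (X : Type u) [TopologicalSpace X] : Prop := ∃ n, CovDimLE X n

/-- `X` is semi-locally simply connected: every point has a neighbourhood `U` such that
every loop in `U` is null-homotopic in `X`. -/
def SemiLocallySimplyConnected (X : Type u) [TopologicalSpace X] : Prop :=
  ∀ x : X, ∃ U ∈ 𝓝 x, ∀ γ : Path x x, range γ ⊆ U → γ.Homotopic (Path.refl x)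

/-- `X` is locally contractible: every point has arbitrarily small open neighbourhoods
whose inclusion into `X` is null-homotopic (i.e. they are contractible in `X`). -/
def LocallyContractible (X : Type u) [TopologicalSpace X] : Prop :=
  ∀ (x : X), ∀ U ∈ 𝓝 x, ∃ V : Set X, V ∈ 𝓝 x ∧ V ⊆ U ∧ IsOpen V ∧
    ∃ c : X, Nonempty
      (ContinuousMap.Homotopy (⟨Subtype.val, continuous_subtype_val⟩ : C(V, X))
        (ContinuousMap.const V c))

/-- `X` is aspherical: it admits a universal covering (a covering by a simply connected
space) which is contractible. -/
def IsAspherical (X : Type u) [TopologicalSpace X] : Prop :=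
  ∃ (X' : Type u) (_ : TopologicalSpace X') (P : X' → X),
    IsCoveringMap P ∧ SimplyConnectedSpace X' ∧ ContractibleSpace X'


section CoveringLift
universe e₁ x₁ y₁
variable {E : Type e₁} {X : Type x₁} [TopologicalSpace E] [TopologicalSpace X] {p : E → X}

private theorem slab_extend {Y : Type y₁} [TopologicalSpace Y] (hp : IsCoveringMap p)
    {H : Y × ℝ → X} (hH : Continuous H) (h₀ : Y → E) (y : Y) (t : ℝ) :
    ∃ ε > 0, ∀ t₀ t₁ : ℝ, 0 ≤ t₀ → t₀ ≤ t₁ → |t₀ - t| < ε → |t₁ - t| < ε →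
      (∃ N : Set Y, IsOpen N ∧ y ∈ N ∧ ∃ L : Y × ℝ → E, ContinuousOn L (N ×ˢ Icc 0 t₀) ∧
        (∀ y' ∈ N, L (y', 0) = h₀ y') ∧ ∀ z ∈ N ×ˢ Icc (0:ℝ) t₀, p (L z) = H z) →
      ∃ N : Set Y, IsOpen N ∧ y ∈ N ∧ ∃ L : Y × ℝ → E, ContinuousOn L (N ×ˢ Icc 0 t₁) ∧
        (∀ y' ∈ N, L (y', 0) = h₀ y') ∧ ∀ z ∈ N ×ˢ Icc (0:ℝ) t₁, p (L z) = H z := by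
  classical
  by_cases hne : Nonempty (p ⁻¹' {H (y, t)})
  swap
  · obtain ⟨-, U, hxU, hU, -, Φ, -⟩ := hp (H (y, t))
    obtain ⟨u, v, hu, hv, hyu, htv, huv⟩ :=
      isOpen_prod_iff.mp (hU.preimage hH) y t hxU
    obtain ⟨ε, hε, hball⟩ := Metric.isOpen_iff.mp hv t htv
    refine ⟨ε, hε, ?_⟩
    rintro t₀ t₁ ht₀0 - ht₀ - ⟨N, -, hyN, L, -, -, hLp⟩
    have hU0 : p (L (y, t₀)) ∈ U := by
      rw [hLp (y, t₀) ⟨hyN, ht₀0, le_rfl⟩]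
      exact huv (mk_mem_prod hyu (hball (show t₀ ∈ Metric.ball t ε by
        rw [Metric.mem_ball, Real.dist_eq]; exact ht₀)))
    exact absurd ⟨(Φ ⟨L (y, t₀), hU0⟩).2⟩ hne
  obtain ⟨T, hyT⟩ : ∃ T : Bundle.Trivialization (p ⁻¹' {H (y, t)}) p, H (y, t) ∈ T.baseSet :=
    ⟨(hp _).toTrivialization, (hp _).mem_toTrivialization_baseSet⟩
  have hO : IsOpen (H ⁻¹' T.baseSet) := T.open_baseSet.preimage hH
  obtain ⟨u, v, hu, hv, hyu, htv, huv⟩ := isOpen_prod_iff.mp hO y t hyT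
  obtain ⟨ε, hε, hball⟩ := Metric.isOpen_iff.mp hv t htv
  refine ⟨ε, hε, ?_⟩
  rintro t₀ t₁ ht₀0 ht₀₁ ht₀ ht₁ ⟨N, hNo, hyN, L, hLc, hL0, hLp⟩
  obtain ⟨hta, htb⟩ := abs_sub_lt_iff.mp ht₀   -- t₀ - t < ε, t - t₀ < ε
  obtain ⟨htc, htd⟩ := abs_sub_lt_iff.mp ht₁
  have hmem : ∀ y' ∈ u, ∀ s : ℝ, |s - t| < ε → H (y', s) ∈ T.baseSet := by
    intro y' hy' s hs
    exact huv (mk_mem_prod hy' (hball (show s ∈ Metric.ball t ε by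
      rw [Metric.mem_ball, Real.dist_eq]; exact hs)))
  have ht₀src : ∀ y' ∈ N ∩ u, L (y', t₀) ∈ T.source := by
    intro y' hy'
    rw [T.mem_source, hLp (y', t₀) ⟨hy'.1, ht₀0, le_rfl⟩]
    exact hmem y' hy'.2 t₀ ht₀
  set c : Y → (p ⁻¹' {H (y, t)}) := fun y' => (T (L (y', t₀))).2 with hcdef
  set F : Y × ℝ → E := fun z => T.toOpenPartialHomeomorph.symm (H z, c z.1) with hFdef
  have hproj : ∀ w : X × (p ⁻¹' {H (y, t)}), w ∈ T.target →
      p (T.toOpenPartialHomeomorph.symm w) = w.1 := fun w hw => T.proj_symm_apply hw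
  have hTsnd : ∀ y' ∈ N ∩ u, T.toOpenPartialHomeomorph.symm (H (y', t₀), c y') = L (y', t₀) := by
    intro y' hy'
    have h1 : (H (y', t₀), c y') = T (L (y', t₀)) := by
      rw [← hLp (y', t₀) ⟨hy'.1, ht₀0, le_rfl⟩]
      exact T.mk_proj_snd (ht₀src y' hy')
    rw [h1]
    exact T.toOpenPartialHomeomorph.left_inv (ht₀src y' hy')
  have hcc : ContinuousOn c (N ∩ u) := by
    have h1 : ContinuousOn (fun y' : Y => L (y', t₀)) (N ∩ u) := by
      apply hLc.comp (Continuous.continuousOn (continuous_id.prodMk continuous_const))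
      intro y' hy'
      exact ⟨hy'.1, ht₀0, le_rfl⟩
    exact continuous_snd.comp_continuousOn (T.continuousOn_toFun.comp h1 ht₀src)
  have key : ∀ y' ∈ N ∩ u, EqOn (fun s : ℝ => L (y', s))
      (fun s : ℝ => T.toOpenPartialHomeomorph.symm (H (y', s), c y'))
      (Ioo (t - ε) (t + ε) ∩ Icc 0 t₀) := by
    intro y' hy'
    have hJ : IsPreconnected (Ioo (t - ε) (t + ε) ∩ Icc 0 t₀) :=
      (Set.ordConnected_Ioo.inter Set.ordConnected_Icc).isPreconnected
    have htarg : ∀ s ∈ Ioo (t - ε) (t + ε) ∩ Icc 0 t₀,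
        ((H (y', s), c y') : X × (p ⁻¹' {H (y, t)})) ∈ T.target := by
      intro s hs
      rw [T.mem_target]
      exact hmem y' hy'.2 s (abs_sub_lt_iff.mpr ⟨by linarith [hs.1.2], by linarith [hs.1.1]⟩)
    refine hp.eqOn_of_comp_eqOn hJ ?_ ?_ ?_ (a := t₀) ⟨⟨by linarith, by linarith⟩, ht₀0, le_rfl⟩
      (hTsnd y' hy').symm
    · apply hLc.comp (Continuous.continuousOn (Continuous.prodMk_right y'))
      intro s hs
      exact ⟨hy'.1, hs.2⟩
    · apply T.toOpenPartialHomeomorph.continuousOn_symm.comp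
        (Continuous.continuousOn ((hH.comp (Continuous.prodMk_right y')).prodMk continuous_const)) htarg
    · intro s hs
      show p (L (y', s)) = p (T.toOpenPartialHomeomorph.symm (H (y', s), c y'))
      rw [hLp (y', s) ⟨hy'.1, hs.2⟩, hproj _ (htarg s hs)]
  refine ⟨N ∩ u, hNo.inter hu, ⟨hyN, hyu⟩,
    fun z => if z.2 ≤ t₀ then L z else F z, ?_, ?_, ?_⟩
  · -- continuity
    apply ContinuousOn.if
    · rintro z ⟨hzD, hzf⟩
      have hz2 : z.2 = t₀ := frontier_le_subset_eq continuous_snd continuous_const hzf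
      have hzz : z = (z.1, t₀) := by rw [← hz2]
      have hm : t₀ ∈ Ioo (t - ε) (t + ε) ∩ Icc (0:ℝ) t₀ :=
        ⟨⟨by linarith, by linarith⟩, ht₀0, le_rfl⟩
      rw [hzz]
      exact key z.1 hzD.1 hm
    · apply hLc.mono
      rintro z ⟨hzD, hzc⟩
      have h2 : z.2 ≤ t₀ := by
        have hcl : closure {a : Y × ℝ | a.2 ≤ t₀} = {a : Y × ℝ | a.2 ≤ t₀} :=
          (isClosed_le continuous_snd continuous_const).closure_eq
        rw [hcl] at hzc
        exact hzc
      exact ⟨hzD.1.1, hzD.2.1, h2⟩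
    · have hsub : (N ∩ u) ×ˢ Icc 0 t₁ ∩ closure {a : Y × ℝ | ¬a.2 ≤ t₀} ⊆
          ((N ∩ u) ×ˢ Icc 0 t₁) ∩ {a : Y × ℝ | t₀ ≤ a.2} := by
        rintro z ⟨hzD, hzc⟩
        refine ⟨hzD, ?_⟩
        have hcl : closure {a : Y × ℝ | t₀ < a.2} ⊆ {a : Y × ℝ | t₀ ≤ a.2} :=
          closure_lt_subset_le continuous_const continuous_snd
        apply hcl
        have : {a : Y × ℝ | ¬a.2 ≤ t₀} = {a : Y × ℝ | t₀ < a.2} := by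
          ext a; simp [not_le]
        rwa [this] at hzc
      apply ContinuousOn.mono _ hsub
      have htarg : ∀ z ∈ ((N ∩ u) ×ˢ Icc 0 t₁) ∩ {a : Y × ℝ | t₀ ≤ a.2},
          ((H z, c z.1) : X × (p ⁻¹' {H (y, t)})) ∈ T.target := by
        rintro z ⟨hzD, hz2⟩
        have hz2' : t₀ ≤ z.2 := hz2
        rw [T.mem_target]
        exact hmem z.1 hzD.1.2 z.2
          (abs_sub_lt_iff.mpr ⟨by linarith [hzD.2.2], by linarith⟩)
      apply T.toOpenPartialHomeomorph.continuousOn_symm.comp _ htarg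
      exact hH.continuousOn.prodMk
        ((hcc.comp continuous_fst.continuousOn (fun z hz => hz.1.1)))
  · intro y' hy'
    show (if (0:ℝ) ≤ t₀ then L (y', (0:ℝ)) else F (y', (0:ℝ))) = h₀ y'
    rw [if_pos ht₀0]
    exact hL0 y' hy'.1
  · rintro z hz
    show p (if z.2 ≤ t₀ then L z else F z) = H z
    by_cases hle : z.2 ≤ t₀
    · rw [if_pos hle]
      exact hLp z ⟨hz.1.1, hz.2.1, hle⟩
    · rw [if_neg hle]
      push_neg at hle
      exact hproj _ (by
        rw [T.mem_target]
        exact hmem z.1 hz.1.2 z.2 (abs_sub_lt_iff.mpr ⟨by linarith [hz.2.2], by linarith⟩))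


private theorem slab_lift {Y : Type y₁} [TopologicalSpace Y] (hp : IsCoveringMap p)
    {H : Y × ℝ → X} (hH : Continuous H) {h₀ : Y → E} (hc : Continuous h₀)
    (h00 : ∀ y, p (h₀ y) = H (y, 0)) (y : Y) (b : ℝ) :
    ∃ N : Set Y, IsOpen N ∧ y ∈ N ∧ ∃ L : Y × ℝ → E, ContinuousOn L (N ×ˢ Icc 0 b) ∧
      (∀ y' ∈ N, L (y', 0) = h₀ y') ∧ ∀ z ∈ N ×ˢ Icc (0:ℝ) b, p (L z) = H z := by
  have hP0 : ∃ N : Set Y, IsOpen N ∧ y ∈ N ∧ ∃ L : Y × ℝ → E,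
      ContinuousOn L (N ×ˢ Icc 0 (0:ℝ)) ∧
      (∀ y' ∈ N, L (y', 0) = h₀ y') ∧ ∀ z ∈ N ×ˢ Icc (0:ℝ) (0:ℝ), p (L z) = H z := by
    refine ⟨univ, isOpen_univ, mem_univ y, fun z => h₀ z.1,
      (hc.comp continuous_fst).continuousOn, fun y' _ => rfl, ?_⟩
    rintro z hz
    have h2 : z.2 = (0:ℝ) := le_antisymm hz.2.2 hz.2.1
    have hzz : z = (z.1, (0:ℝ)) := by rw [← h2]
    rw [hzz]
    exact h00 z.1
  rcases lt_or_ge b 0 with hb | hb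
  · refine ⟨univ, isOpen_univ, mem_univ y, fun z => h₀ z.1,
      (hc.comp continuous_fst).continuousOn, fun y' _ => rfl, ?_⟩
    rintro z hz
    exact absurd (le_trans hz.2.1 hz.2.2) (not_le.mpr hb)
  set S : Set ℝ := {t | t ∈ Icc 0 b ∧ ∃ N : Set Y, IsOpen N ∧ y ∈ N ∧ ∃ L : Y × ℝ → E,
    ContinuousOn L (N ×ˢ Icc 0 t) ∧
    (∀ y' ∈ N, L (y', 0) = h₀ y') ∧ ∀ z ∈ N ×ˢ Icc (0:ℝ) t, p (L z) = H z} with hSdef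
  have hS0 : (0:ℝ) ∈ S := ⟨⟨le_rfl, hb⟩, hP0⟩
  have hSne : S.Nonempty := ⟨0, hS0⟩
  have hSbdd : BddAbove S := ⟨b, fun t ht => ht.1.2⟩
  have hc0 : 0 ≤ sSup S := le_csSup hSbdd hS0
  have hcb : sSup S ≤ b := csSup_le hSne fun t ht => ht.1.2
  obtain ⟨ε, hε, hstep⟩ := slab_extend hp hH h₀ y (sSup S)
  obtain ⟨t₀, ht₀S, ht₀gt⟩ := exists_lt_of_lt_csSup hSne
    (show sSup S - ε / 2 < sSup S by linarith)
  have ht₀le : t₀ ≤ sSup S := le_csSup hSbdd ht₀S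
  have h2 : t₀ ≤ min b (sSup S + ε / 2) := le_min ht₀S.1.2 (by linarith)
  have h3 : min b (sSup S + ε / 2) ≤ sSup S + ε / 2 := min_le_right _ _
  have h4 : min b (sSup S + ε / 2) ≥ t₀ := h2
  have hPt₁ := hstep t₀ (min b (sSup S + ε / 2)) ht₀S.1.1 h2
    (abs_sub_lt_iff.mpr ⟨by linarith, by linarith⟩)
    (abs_sub_lt_iff.mpr ⟨by linarith, by linarith⟩) ht₀S.2
  have ht₁S : min b (sSup S + ε / 2) ∈ S :=
    ⟨⟨le_trans ht₀S.1.1 h2, min_le_left _ _⟩, hPt₁⟩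
  have ht₁c : min b (sSup S + ε / 2) ≤ sSup S := le_csSup hSbdd ht₁S
  have hbc : b ≤ sSup S := by
    by_contra hlt
    push_neg at hlt
    have : sSup S < min b (sSup S + ε / 2) := lt_min hlt (by linarith)
    linarith
  have ht₁b : min b (sSup S + ε / 2) = b := min_eq_left (by linarith)
  rw [ht₁b] at hPt₁
  exact hPt₁

theorem IsCoveringMap.hlp (hp : IsCoveringMap p)
    {Y : Type y₁} [TopologicalSpace Y] {H : Y × unitInterval → X} (hH : Continuous H)
    {h₀ : Y → E} (hc : Continuous h₀) (h00 : ∀ y, p (h₀ y) = H (y, 0)) :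
    ∃ H' : Y × unitInterval → E, Continuous H' ∧ (∀ y, H' (y, 0) = h₀ y) ∧
      ∀ z, p (H' z) = H z := by
  set Ht : Y × ℝ → X := fun z => H (z.1, projIcc 0 1 zero_le_one z.2) with hHt
  have hHtc : Continuous Ht :=
    hH.comp (continuous_fst.prodMk (continuous_projIcc.comp continuous_snd))
  have h00' : ∀ y, p (h₀ y) = Ht (y, 0) := by
    intro y
    rw [h00 y]
    show H (y, 0) = H (y, projIcc 0 1 zero_le_one 0)
    have h1 : projIcc 0 1 zero_le_one (0:ℝ) = (0 : unitInterval) := by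
      apply Subtype.ext
      rw [coe_projIcc]
      norm_num
    rw [h1]
  choose N hNo hyN L hLc hL0 hLp using fun (y : Y) (b : ℝ) =>
    slab_lift hp hHtc hc h00' y b
  have uq : ∀ (y₁ y₂ : Y) (b₁ b₂ : ℝ) (y' : Y) (s : ℝ), y' ∈ N y₁ b₁ → y' ∈ N y₂ b₂ →
      |s| < b₁ → |s| < b₂ →
      L y₁ b₁ (y', max s 0) = L y₂ b₂ (y', max s 0) := by
    intro y₁ y₂ b₁ b₂ y' s hm₁ hm₂ hs₁ hs₂
    have hb₁ : 0 < b₁ := lt_of_le_of_lt (abs_nonneg s) hs₁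
    have hb₂ : 0 < b₂ := lt_of_le_of_lt (abs_nonneg s) hs₂
    have hcm : 0 < min b₁ b₂ := lt_min hb₁ hb₂
    have key : ∀ (y₀ : Y) (bb : ℝ), y' ∈ N y₀ bb → min b₁ b₂ ≤ bb →
        ContinuousOn (fun r : ℝ => L y₀ bb (y', max r 0)) (Ioo (-(min b₁ b₂)) (min b₁ b₂)) ∧
        ∀ r ∈ Ioo (-(min b₁ b₂)) (min b₁ b₂),
          p (L y₀ bb (y', max r 0)) = Ht (y', max r 0) := by
      intro y₀ bb hmem hle
      have hmap : ∀ r ∈ Ioo (-(min b₁ b₂)) (min b₁ b₂),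
          ((y', max r 0) : Y × ℝ) ∈ N y₀ bb ×ˢ Icc (0:ℝ) bb := by
        intro r hr
        exact ⟨hmem, le_max_right _ _, le_trans (max_le hr.2.le hcm.le) hle⟩
      constructor
      · apply (hLc y₀ bb).comp (Continuous.continuousOn (by fun_prop)) hmap
      · intro r hr
        exact hLp y₀ bb (y', max r 0) (hmap r hr)
    have h := hp.eqOn_of_comp_eqOn isPreconnected_Ioo
      (key y₁ b₁ hm₁ (min_le_left _ _)).1 (key y₂ b₂ hm₂ (min_le_right _ _)).1
      (fun r hr => by
        show p (L y₁ b₁ (y', max r 0)) = p (L y₂ b₂ (y', max r 0))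
        rw [(key y₁ b₁ hm₁ (min_le_left _ _)).2 r hr,
          (key y₂ b₂ hm₂ (min_le_right _ _)).2 r hr])
      (a := 0) ⟨by linarith, hcm⟩
      (by
        show L y₁ b₁ (y', max 0 0) = L y₂ b₂ (y', max 0 0)
        rw [max_self]
        rw [hL0 y₁ b₁ y' hm₁, hL0 y₂ b₂ y' hm₂])
    exact h (abs_lt.mp (lt_min hs₁ hs₂))
  set G : Y × ℝ → E := fun z => L z.1 (|z.2| + 1) (z.1, max z.2 0) with hG
  have hGc : Continuous G := by
    rw [continuous_iff_continuousAt]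
    rintro ⟨y, s⟩
    have hW : IsOpen (N y (|s| + 1) ×ˢ Ioo (-(|s| + 1)) (|s| + 1)) :=
      (hNo y (|s| + 1)).prod isOpen_Ioo
    have hWm : ((y, s) : Y × ℝ) ∈ N y (|s| + 1) ×ˢ Ioo (-(|s| + 1)) (|s| + 1) :=
      ⟨hyN y (|s| + 1), abs_lt.mp (lt_add_one _)⟩
    have hM : ContinuousOn (fun z : Y × ℝ => L y (|s| + 1) (z.1, max z.2 0))
        (N y (|s| + 1) ×ˢ Ioo (-(|s| + 1)) (|s| + 1)) := by
      apply (hLc y (|s| + 1)).comp (Continuous.continuousOn (by fun_prop))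
      rintro ⟨y', r⟩ hz
      exact ⟨hz.1, le_max_right _ _, max_le hz.2.2.le (by positivity)⟩
    have hEq : EqOn G (fun z : Y × ℝ => L y (|s| + 1) (z.1, max z.2 0))
        (N y (|s| + 1) ×ˢ Ioo (-(|s| + 1)) (|s| + 1)) := by
      rintro ⟨y', r⟩ hz
      exact uq y' y (|r| + 1) (|s| + 1) y' r (hyN y' (|r| + 1)) hz.1 (lt_add_one _)
        (abs_lt.mpr ⟨hz.2.1, hz.2.2⟩)
    exact (hM.continuousAt (hW.mem_nhds hWm)).congr
      (Filter.eventuallyEq_of_mem (hW.mem_nhds hWm) hEq).symm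
  refine ⟨fun z => G (z.1, (z.2 : ℝ)),
    hGc.comp (continuous_fst.prodMk (continuous_subtype_val.comp continuous_snd)), ?_, ?_⟩
  · intro y
    show L y (|((0 : unitInterval) : ℝ)| + 1) (y, max ((0 : unitInterval) : ℝ) 0) = h₀ y
    have h1 : ((0 : unitInterval) : ℝ) = 0 := rfl
    rw [h1, max_self, hL0 _ _ y (hyN _ _)]
  · rintro ⟨y, t⟩
    have hmap : ((y, max (t : ℝ) 0) : Y × ℝ) ∈
        N y (|(t : ℝ)| + 1) ×ˢ Icc (0:ℝ) (|(t : ℝ)| + 1) :=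
      ⟨hyN _ _, le_max_right _ _,
        max_le (le_trans (le_abs_self _) (lt_add_one _).le) (by positivity)⟩
    show p (L y (|(t : ℝ)| + 1) (y, max (t : ℝ) 0)) = H (y, t)
    rw [hLp _ _ _ hmap]
    show H (y, projIcc 0 1 zero_le_one (max (t : ℝ) 0)) = H (y, t)
    rw [max_eq_left t.2.1, projIcc_val zero_le_one t]

theorem IsCoveringMap.liftPath' (hp : IsCoveringMap p) {γ : unitInterval → X}
    (hγ : Continuous γ) (e : E) (he : p e = γ 0) :
    ∃ Γ : unitInterval → E, Continuous Γ ∧ Γ 0 = e ∧ ∀ t, p (Γ t) = γ t := by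
  obtain ⟨H', h1, h2, h3⟩ := hp.hlp (Y := PUnit.{1}) (H := fun z : PUnit.{1} × unitInterval => γ z.2)
    (hγ.comp continuous_snd) (h₀ := fun _ => e) continuous_const (fun _ => he)
  exact ⟨fun t => H' (PUnit.unit, t), h1.comp (continuous_const.prodMk continuous_id),
    h2 _, fun t => h3 _⟩

theorem IsCoveringMap.liftPath_endpoint_eq (hp : IsCoveringMap p) {x y : X}
    {γ₁ γ₂ : Path x y} (h : γ₁.Homotopic γ₂) {Γ₁ Γ₂ : unitInterval → E}
    (hΓ₁ : Continuous Γ₁) (hΓ₂ : Continuous Γ₂) (h0 : Γ₁ 0 = Γ₂ 0)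
    (l₁ : ∀ t, p (Γ₁ t) = γ₁ t) (l₂ : ∀ t, p (Γ₂ t) = γ₂ t) : Γ₁ 1 = Γ₂ 1 := by
  obtain ⟨F⟩ := h
  obtain ⟨K, hKc, hK0, hKp⟩ := hp.hlp
    (Y := unitInterval) (H := fun z : unitInterval × unitInterval => F (z.2, z.1))
    (F.continuous.comp (continuous_snd.prodMk continuous_fst)) (h₀ := Γ₁) hΓ₁
    (fun s => by rw [l₁ s]; exact (F.apply_zero s).symm)
  have h11 : K (1, 1) = K (1, 0) := by
    apply hp.const_of_comp (A := unitInterval)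
      (hKc.comp (continuous_const.prodMk continuous_id))
    intro a a'
    show p (K (1, a)) = p (K (1, a'))
    rw [hKp (1, a), hKp (1, a')]
    show F (a, 1) = F (a', 1)
    rw [F.target, F.target]
  have h01 : K (0, 1) = K (0, 0) := by
    apply hp.const_of_comp (A := unitInterval)
      (hKc.comp (continuous_const.prodMk continuous_id))
    intro a a'
    show p (K (0, a)) = p (K (0, a'))
    rw [hKp (0, a), hKp (0, a')]
    show F (a, 0) = F (a', 0)
    rw [F.source, F.source]
  have htop : (fun s => K (s, 1)) = Γ₂ := by
    apply hp.eq_of_comp_eq (hKc.comp (continuous_id.prodMk continuous_const)) hΓ₂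
      (funext fun s => ?_) 0 (by show K (0, 1) = Γ₂ 0; rw [h01, hK0 0, h0])
    show p (K (s, 1)) = p (Γ₂ s)
    rw [hKp (s, 1), l₂ s]
    exact F.apply_one s
  calc Γ₁ 1 = K (1, 0) := (hK0 1).symm
    _ = K (1, 1) := h11.symm
    _ = Γ₂ 1 := congrFun htop 1

theorem IsCoveringMap.surjective' (hp : IsCoveringMap p) [PreconnectedSpace X] [Nonempty E] :
    Function.Surjective p := by
  have hclopen : IsClopen (range p) := by
    constructor
    · rw [← isOpen_compl_iff, isOpen_iff_mem_nhds]
      intro x hx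
      obtain ⟨-, U, hxU, hU, -, Φ, -⟩ := hp x
      refine Filter.mem_of_superset (hU.mem_nhds hxU) ?_
      rintro x' hx' ⟨e, rfl⟩
      exact hx ⟨(Φ ⟨e, hx'⟩).2.1, (Φ ⟨e, hx'⟩).2.2⟩
    · exact hp.isOpenMap.isOpen_range
  have huniv : range p = univ := hclopen.eq_univ ⟨p (Classical.arbitrary E), mem_range_self _⟩
  exact range_eq_univ.mp huniv

theorem IsLocalHomeomorph.locPathConnectedSpace' {f : E → X} (hf : IsLocalHomeomorph f)
    [LocallyPathConnectedSpace X] : LocallyPathConnectedSpace E := by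
  rw [locallyPathConnectedSpace_iff_pathComponentIn_mem_nhds]
  intro x u hu hxu
  obtain ⟨e, hxe, hfe⟩ := hf x
  have hv : IsOpen (e '' (u ∩ e.source)) :=
    e.isOpen_image_of_subset_source (hu.inter e.open_source) inter_subset_right
  have hxv : e x ∈ e '' (u ∩ e.source) := ⟨x, ⟨hxu, hxe⟩, rfl⟩
  have hWo : IsOpen (pathComponentIn (e '' (u ∩ e.source)) (e x)) := hv.pathComponentIn _
  have hWx : e x ∈ pathComponentIn (e '' (u ∩ e.source)) (e x) := mem_pathComponentIn_self hxv
  have hWpc : IsPathConnected (pathComponentIn (e '' (u ∩ e.source)) (e x)) :=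
    isPathConnected_pathComponentIn hxv
  have hWsub : pathComponentIn (e '' (u ∩ e.source)) (e x) ⊆ e.target :=
    pathComponentIn_subset.trans (by
      rw [← e.image_source_eq_target]
      exact image_mono inter_subset_right)
  have hSo : IsOpen (e.symm '' pathComponentIn (e '' (u ∩ e.source)) (e x)) :=
    e.symm.isOpen_image_of_subset_source hWo hWsub
  have hSx : x ∈ e.symm '' pathComponentIn (e '' (u ∩ e.source)) (e x) :=
    ⟨e x, hWx, e.left_inv hxe⟩
  have hSpc : IsPathConnected (e.symm '' pathComponentIn (e '' (u ∩ e.source)) (e x)) :=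
    hWpc.image' (e.continuousOn_symm.mono hWsub)
  have hSu : e.symm '' pathComponentIn (e '' (u ∩ e.source)) (e x) ⊆ u := by
    rintro - ⟨w, hw, rfl⟩
    obtain ⟨z, hz, rfl⟩ := pathComponentIn_subset hw
    rw [e.left_inv hz.2]
    exact hz.1
  exact Filter.mem_of_superset (hSo.mem_nhds hSx) (hSpc.subset_pathComponentIn hSx hSu)

theorem IsCoveringMap.lift_trans (hp : IsCoveringMap p) {x y z : X}
    (γ₁ : Path x y) (γ₂ : Path y z) {Γ₁ Γ₂ : unitInterval → E}
    (hΓ₁ : Continuous Γ₁) (hΓ₂ : Continuous Γ₂)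
    (l₁ : ∀ t, p (Γ₁ t) = γ₁ t) (l₂ : ∀ t, p (Γ₂ t) = γ₂ t) (hjoin : Γ₂ 0 = Γ₁ 1) :
    ∃ Γ : unitInterval → E, Continuous Γ ∧ Γ 0 = Γ₁ 0 ∧ Γ 1 = Γ₂ 1 ∧
      ∀ t, p (Γ t) = (γ₁.trans γ₂) t := by
  classical
  set j₁ : unitInterval → unitInterval :=
    fun t => projIcc 0 1 zero_le_one (2 * (t : ℝ)) with hj₁
  set j₂ : unitInterval → unitInterval :=
    fun t => projIcc 0 1 zero_le_one (2 * (t : ℝ) - 1) with hj₂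
  have hj₁c : Continuous j₁ := continuous_projIcc.comp (by fun_prop)
  have hj₂c : Continuous j₂ := continuous_projIcc.comp (by fun_prop)
  refine ⟨fun t => if (t : ℝ) ≤ 1 / 2 then Γ₁ (j₁ t) else Γ₂ (j₂ t), ?_, ?_, ?_, ?_⟩
  · apply Continuous.if_le (hΓ₁.comp hj₁c) (hΓ₂.comp hj₂c) continuous_subtype_val
      continuous_const
    intro t ht
    show Γ₁ (j₁ t) = Γ₂ (j₂ t)
    have e1 : j₁ t = 1 := by
      apply Subtype.ext
      rw [hj₁]
      show (projIcc 0 1 zero_le_one (2 * (t : ℝ)) : ℝ) = 1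
      rw [coe_projIcc, ht]
      norm_num
    have e2 : j₂ t = 0 := by
      apply Subtype.ext
      rw [hj₂]
      show (projIcc 0 1 zero_le_one (2 * (t : ℝ) - 1) : ℝ) = 0
      rw [coe_projIcc, ht]
      norm_num
    rw [e1, e2, hjoin]
  · have h0 : ((0 : unitInterval) : ℝ) ≤ 1 / 2 := by norm_num
    show (if ((0 : unitInterval) : ℝ) ≤ 1 / 2 then Γ₁ (j₁ 0) else Γ₂ (j₂ 0)) = Γ₁ 0
    rw [if_pos h0]
    have e1 : j₁ 0 = 0 := by
      apply Subtype.ext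
      rw [hj₁]
      show (projIcc 0 1 zero_le_one (2 * ((0 : unitInterval) : ℝ)) : ℝ) = 0
      rw [coe_projIcc]
      norm_num
    rw [e1]
  · have h1 : ¬((1 : unitInterval) : ℝ) ≤ 1 / 2 := by norm_num
    show (if ((1 : unitInterval) : ℝ) ≤ 1 / 2 then Γ₁ (j₁ 1) else Γ₂ (j₂ 1)) = Γ₂ 1
    rw [if_neg h1]
    have e2 : j₂ 1 = 1 := by
      apply Subtype.ext
      rw [hj₂]
      show (projIcc 0 1 zero_le_one (2 * ((1 : unitInterval) : ℝ) - 1) : ℝ) = 1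
      rw [coe_projIcc]
      norm_num
    rw [e2]
  · intro t
    show p (if (t : ℝ) ≤ 1 / 2 then Γ₁ (j₁ t) else Γ₂ (j₂ t)) = (γ₁.trans γ₂) t
    rw [Path.trans_apply]
    by_cases hle : (t : ℝ) ≤ 1 / 2
    · rw [if_pos hle, dif_pos hle, l₁]
      congr 1
      apply Subtype.ext
      rw [hj₁]
      show (projIcc 0 1 zero_le_one (2 * (t : ℝ)) : ℝ) = 2 * (t : ℝ)
      rw [coe_projIcc]
      have := t.2.1
      have : (0:ℝ) ≤ 2 * (t : ℝ) := by linarith [t.2.1]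
      rw [min_eq_right (by linarith), max_eq_right this]
    · rw [if_neg hle, dif_neg hle, l₂]
      congr 1
      apply Subtype.ext
      rw [hj₂]
      show (projIcc 0 1 zero_le_one (2 * (t : ℝ) - 1) : ℝ) = 2 * (t : ℝ) - 1
      rw [coe_projIcc]
      push_neg at hle
      rw [min_eq_right (by linarith [t.2.2]), max_eq_right (by linarith)]

theorem IsCoveringMap.exists_lift {A : Type y₁} [TopologicalSpace A] [SimplyConnectedSpace A]
    [LocallyPathConnectedSpace A] (hp : IsCoveringMap p) {f : A → X} (hf : Continuous f)
    (a₀ : A) (b₀ : E) (hb₀ : p b₀ = f a₀) :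
    ∃ g : A → E, Continuous g ∧ (∀ a, p (g a) = f a) ∧ g a₀ = b₀ := by
  have hlift : ∀ a : A, ∃ Γ : unitInterval → E, Continuous Γ ∧ Γ 0 = b₀ ∧
      ∀ t, p (Γ t) = f ((PathConnectedSpace.somePath a₀ a) t) := by
    intro a
    apply hp.liftPath' (hf.comp (PathConnectedSpace.somePath a₀ a).continuous) b₀
    show p b₀ = f ((PathConnectedSpace.somePath a₀ a) 0)
    rw [hb₀, Path.source]
  choose Γ hΓc hΓ0 hΓl using hlift
  have ind : ∀ (a : A) (δ : Path a₀ a) (Δ : unitInterval → E), Continuous Δ → Δ 0 = b₀ →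
      (∀ t, p (Δ t) = f (δ t)) → Δ 1 = Γ a 1 := by
    intro a δ Δ hΔc hΔ0 hΔl
    have hhom : (δ.map hf).Homotopic ((PathConnectedSpace.somePath a₀ a).map hf) :=
      Path.Homotopic.map
        (SimplyConnectedSpace.paths_homotopic δ (PathConnectedSpace.somePath a₀ a)) ⟨f, hf⟩
    exact hp.liftPath_endpoint_eq hhom hΔc (hΓc a) (by rw [hΔ0, hΓ0 a])
      (fun t => hΔl t) (fun t => hΓl a t)
  have hpg : ∀ a, p (Γ a 1) = f a := fun a => by rw [hΓl a 1, Path.target]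
  have hga₀ : Γ a₀ 1 = b₀ := by
    have := ind a₀ (Path.refl a₀) (fun _ => b₀) continuous_const rfl
      (fun t => by rw [Path.refl_apply]; exact hb₀)
    exact this.symm
  have hgc : Continuous (fun a => Γ a 1) := by
    rw [continuous_iff_continuousAt]
    intro a
    haveI : Nonempty (p ⁻¹' {f a}) := ⟨⟨Γ a 1, hpg a⟩⟩
    obtain ⟨T, haT⟩ : ∃ T : Bundle.Trivialization (p ⁻¹' {f a}) p, f a ∈ T.baseSet :=
      ⟨(hp (f a)).toTrivialization, (hp (f a)).mem_toTrivialization_baseSet⟩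
    have hu : IsOpen (f ⁻¹' T.baseSet) := T.open_baseSet.preimage hf
    have hau : a ∈ f ⁻¹' T.baseSet := haT
    have hOo : IsOpen (pathComponentIn (f ⁻¹' T.baseSet) a) := hu.pathComponentIn _
    have haO : a ∈ pathComponentIn (f ⁻¹' T.baseSet) a := mem_pathComponentIn_self hau
    have hOpc : IsPathConnected (pathComponentIn (f ⁻¹' T.baseSet) a) :=
      isPathConnected_pathComponentIn hau
    have hOu : pathComponentIn (f ⁻¹' T.baseSet) a ⊆ f ⁻¹' T.baseSet := pathComponentIn_subset
    have hgaT : Γ a 1 ∈ T.source := T.mem_source.mpr (by rw [hpg a]; exact haT)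
    have hkey : EqOn (fun a => Γ a 1)
        (fun w => T.toOpenPartialHomeomorph.symm (f w, (T (Γ a 1)).2))
        (pathComponentIn (f ⁻¹' T.baseSet) a) := by
      intro w hw
      obtain ⟨β, hβ⟩ := hOpc.joinedIn a haO w hw
      have htarg : ∀ t : unitInterval,
          ((f (β t), (T (Γ a 1)).2) : X × (p ⁻¹' {f a})) ∈ T.target := by
        intro t
        rw [T.mem_target]
        exact hOu (hβ t)
      have hm₂c : Continuous (fun t : unitInterval =>
          T.toOpenPartialHomeomorph.symm (f (β t), (T (Γ a 1)).2)) :=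
        T.toOpenPartialHomeomorph.continuousOn_symm.comp_continuous
          ((hf.comp β.continuous).prodMk continuous_const) htarg
      have hm₂l : ∀ t, p (T.toOpenPartialHomeomorph.symm (f (β t), (T (Γ a 1)).2)) = f (β t) :=
        fun t => T.proj_symm_apply (htarg t)
      have hm₂0 : T.toOpenPartialHomeomorph.symm (f (β 0), (T (Γ a 1)).2) = Γ a 1 := by
        have hβ0 : β 0 = a := β.source
        rw [hβ0]
        have h1 : ((f a, (T (Γ a 1)).2) : X × (p ⁻¹' {f a})) = T (Γ a 1) := by
          have mk := T.mk_proj_snd hgaT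
          rwa [hpg a] at mk
        calc T.toOpenPartialHomeomorph.symm ((f a, (T (Γ a 1)).2) : X × (p ⁻¹' {f a}))
            = T.toOpenPartialHomeomorph.symm (T (Γ a 1)) := congrArg _ h1
          _ = Γ a 1 := T.toOpenPartialHomeomorph.left_inv hgaT
      obtain ⟨Γ', hΓ'c, hΓ'0, hΓ'1, hΓ'l⟩ := hp.lift_trans
        ((PathConnectedSpace.somePath a₀ a).map hf) (β.map hf) (hΓc a) hm₂c
        (fun t => hΓl a t) (fun t => hm₂l t) hm₂0
      have htrans : ∀ t, p (Γ' t) =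
          f (((PathConnectedSpace.somePath a₀ a).trans β) t) := by
        intro t
        rw [hΓ'l t, ← Path.map_trans]
        rfl
      have hend := ind w ((PathConnectedSpace.somePath a₀ a).trans β) Γ' hΓ'c
        (by rw [hΓ'0, hΓ0 a]) htrans
      have hβ1 : β 1 = w := β.target
      calc Γ w 1 = Γ' 1 := hend.symm
        _ = T.toOpenPartialHomeomorph.symm (f (β 1), (T (Γ a 1)).2) := hΓ'1
        _ = T.toOpenPartialHomeomorph.symm (f w, (T (Γ a 1)).2) := by rw [hβ1]
    have hcont : ContinuousOn (fun w => T.toOpenPartialHomeomorph.symm (f w, (T (Γ a 1)).2))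
        (pathComponentIn (f ⁻¹' T.baseSet) a) := by
      apply T.toOpenPartialHomeomorph.continuousOn_symm.comp
        (hf.continuousOn.prodMk continuousOn_const)
      intro w hw
      rw [T.mem_target]
      exact hOu hw
    exact (hcont.continuousAt (hOo.mem_nhds haO)).congr
      (Filter.eventuallyEq_of_mem (hOo.mem_nhds haO) hkey).symm
  exact ⟨fun a => Γ a 1, hgc, hpg, hga₀⟩
end CoveringLift

section Transfer
universe w₁ w₂

/-- Transfer the homotopy lifting property across universes, via a continuous lifting
function obtained from the universal test space. -/
theorem IsHurewiczFibration.hlp_any {E B : Type} [TopologicalSpace E] [TopologicalSpace B]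
    {π : E → B} (hπ : IsHurewiczFibration.{0, 0, w₁} π) {X : Type w₂} [TopologicalSpace X]
    (H : C(X × I, B)) (h₀ : C(X, E)) (h : ∀ x, π (h₀ x) = H (x, 0)) :
    ∃ H' : C(X × I, E), (∀ x : X, H' (x, 0) = h₀ x) ∧ ∀ z : X × I, π (H' z) = H z := by
  let ψ : ULift.{w₁} {pp : E × C(I, B) // pp.2 0 = π pp.1} ≃ₜ
      {pp : E × C(I, B) // pp.2 0 = π pp.1} := Homeomorph.ulift
  have hψc : Continuous fun x : ULift.{w₁} {pp : E × C(I, B) // pp.2 0 = π pp.1} =>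
      (ψ x).1 := continuous_subtype_val.comp ψ.continuous
  have hevc : Continuous fun z : ULift.{w₁} {pp : E × C(I, B) // pp.2 0 = π pp.1} × I =>
      ((ψ z.1).1.2 : C(I, B)) z.2 := by
    have h1 : Continuous fun z : ULift.{w₁} {pp : E × C(I, B) // pp.2 0 = π pp.1} × I =>
        ((((ψ z.1).1.2 : C(I, B)), z.2) : C(I, B) × I) :=
      (continuous_snd.comp (hψc.comp continuous_fst)).prodMk continuous_snd
    exact ContinuousEval.continuous_eval.comp h1
  obtain ⟨Λ, hΛ0, hΛp⟩ := hπ.2 (ULift.{w₁} {pp : E × C(I, B) // pp.2 0 = π pp.1})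
    ⟨fun z => ((ψ z.1).1.2 : C(I, B)) z.2, hevc⟩
    ⟨fun x => (ψ x).1.1, continuous_fst.comp hψc⟩
    (fun x => ((ψ x).2).symm)
  have hmk : ∀ x : X, ((h₀ x, H.curry x) : E × C(I, B)).2 0 = π (h₀ x) := fun x => by
    show H.curry x 0 = π (h₀ x)
    rw [ContinuousMap.curry_apply]
    exact (h x).symm
  have hφc : Continuous fun x : X =>
      ψ.symm ⟨(h₀ x, H.curry x), hmk x⟩ :=
    ψ.symm.continuous.comp
      (Continuous.subtype_mk (h₀.continuous.prodMk H.curry.continuous) _)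
  refine ⟨⟨fun z => Λ (ψ.symm ⟨(h₀ z.1, H.curry z.1), hmk z.1⟩, z.2),
    Λ.continuous.comp ((hφc.comp continuous_fst).prodMk continuous_snd)⟩, ?_, ?_⟩
  · intro x
    show Λ (ψ.symm ⟨(h₀ x, H.curry x), hmk x⟩, 0) = h₀ x
    rw [hΛ0 (ψ.symm ⟨(h₀ x, H.curry x), hmk x⟩)]
    show (ψ (ψ.symm ⟨(h₀ x, H.curry x), hmk x⟩)).1.1 = h₀ x
    rw [ψ.apply_symm_apply]
  · rintro ⟨x, t⟩
    show π (Λ (ψ.symm ⟨(h₀ x, H.curry x), hmk x⟩, t)) = H (x, t)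
    rw [hΛp (ψ.symm ⟨(h₀ x, H.curry x), hmk x⟩, t)]
    show ((ψ (ψ.symm ⟨(h₀ x, H.curry x), hmk x⟩)).1.2 : C(I, B)) t = H (x, t)
    rw [ψ.apply_symm_apply]
    exact H.curry_apply x t

end Transfer

/-- **Proposition 8(a) (Cacciatori–Pigola).**
Let `π : E → B` be a Hurewicz fibration between connected, locally path connected,
semi-locally simply connected spaces with the homotopy type of a CW-complex, and let
`P_E : E' → E` and `P_B : B' → B` be the universal covering projections.  Then there is a
Hurewicz fibration `π' : E' → B'` with `P_B ∘ π' = π ∘ P_E`. -/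
theorem hurewicz_fibration_lifts_to_univCoverings
    {E B : Type} [TopologicalSpace E] [TopologicalSpace B]
    [ConnectedSpace E] [ConnectedSpace B]
    [LocallyPathConnectedSpace E] [LocallyPathConnectedSpace B]
    (hE_slsc : SemiLocallySimplyConnected E) (hB_slsc : SemiLocallySimplyConnected B)
    (hE_cw : HasCWHomotopyType E) (hB_cw : HasCWHomotopyType B)
    (π : E → B) (hπ : IsHurewiczFibration π)
    {E' B' : Type} [TopologicalSpace E'] [TopologicalSpace B']
    (P_E : E' → E) (hPE : IsCoveringMap P_E) [SimplyConnectedSpace E']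
    (P_B : B' → B) (hPB : IsCoveringMap P_B) [SimplyConnectedSpace B'] :
    ∃ π' : E' → B', IsHurewiczFibration π' ∧ P_B ∘ π' = π ∘ P_E := by
  classical
  haveI : Nonempty E' := (inferInstance : PathConnectedSpace E').nonempty
  haveI : Nonempty B' := (inferInstance : PathConnectedSpace B').nonempty
  haveI : LocallyPathConnectedSpace E' := hPE.isLocalHomeomorph.locPathConnectedSpace'
  have hfc : Continuous (fun a : E' => π (P_E a)) := hπ.1.comp hPE.continuous
  obtain ⟨b₀, hb₀⟩ := hPB.surjective' (π (P_E (Classical.arbitrary E')))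
  obtain ⟨π', hπ'c, hπ'l, -⟩ := hPB.exists_lift hfc (Classical.arbitrary E') b₀ hb₀
  refine ⟨π', ⟨hπ'c, ?_⟩, funext hπ'l⟩
  intro X _ H h₀ hcomp
  obtain ⟨Ht, hHt0, hHtl⟩ := hπ.hlp_any (X := X)
    ⟨fun z => P_B (H z), hPB.continuous.comp H.continuous⟩
    ⟨fun x => P_E (h₀ x), hPE.continuous.comp h₀.continuous⟩
    (fun x => by
      show π (P_E (h₀ x)) = P_B (H (x, 0))
      rw [← hcomp x, ← hπ'l (h₀ x)])
  obtain ⟨H'', hH''c, hH''0, hH''l⟩ := hPE.hlp (H := ⇑Ht) Ht.continuous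
    (h₀ := ⇑h₀) h₀.continuous (fun x => (hHt0 x).symm)
  refine ⟨⟨H'', hH''c⟩, hH''0, ?_⟩
  rintro ⟨x, t⟩
  have hslice : (fun τ : I => π' (H'' (x, τ))) = fun τ : I => H (x, τ) := by
    refine hPB.eq_of_comp_eq
      (hπ'c.comp (hH''c.comp (continuous_const.prodMk continuous_id)))
      (H.continuous.comp (continuous_const.prodMk continuous_id))
      (funext fun τ => ?_) 0 ?_
    · show P_B (π' (H'' (x, τ))) = P_B (H (x, τ))
      rw [hπ'l (H'' (x, τ))]
      show π (P_E (H'' (x, τ))) = P_B (H (x, τ))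
      rw [hH''l (x, τ)]
      exact hHtl (x, τ)
    · show π' (H'' (x, 0)) = H (x, 0)
      rw [hH''0 x]
      exact hcomp x
  exact congrFun hslice t
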